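/- The discrete diffusion matrix of the q-times integrated Wiener process, Q(h) with entries Q(h)_{ij} = σ² h^{2q+1-i-j} / ((2q+1-i-j)(q-i)!(q-j)!), equals the integral ∫_0^h exp(U(h-τ)) e_q σ² e_q^T exp(U(h-τ))^T dτ, where U is the upper shift matrix and e_q is the last standard basis vector. -/

import Mathlib

open Matrix

open intervalIntegral

theorem shift_pow_aux (q : ℕ) (U : Matrix (Fin (q + 1)) (Fin (q + 1)) ℝ)
    (hU : ∀ i j : Fin (q + 1), U i j = if (j : ℕ) = (i : ℕ) + 1 then 1 else 0)
    (k : ℕ) (i j : Fin (q+1)) : (U ^ k) i j = if (j : ℕ) = (i : ℕ) + k then 1 else 0 := by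
  induction k generalizing j with
  | zero => simp [Matrix.one_apply, Fin.ext_iff, eq_comm]
  | succ n ih =>
    rw [pow_succ, Matrix.mul_apply]
    simp_rw [ih, hU, ite_mul, one_mul, zero_mul]
    by_cases hle : (i : ℕ) + n ≤ q
    · have hb : (i : ℕ) + n < q + 1 := Nat.lt_succ_of_le hle
      rw [Finset.sum_eq_single (⟨(i : ℕ) + n, hb⟩ : Fin (q+1))]
      · simp [← add_assoc]
      · intro b _ hbne
        have : (b : ℕ) ≠ (i : ℕ) + n := by
          intro hc; apply hbne; exact Fin.ext hc
        simp [this]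
      · simp
    · have h1 : ∀ b : Fin (q+1), (b : ℕ) ≠ (i : ℕ) + n := by
        intro b hc
        exact hle (hc ▸ Nat.lt_succ_iff.mp b.isLt)
      have h2 : (j : ℕ) ≠ (i : ℕ) + (n + 1) := by
        intro hc
        have := Nat.lt_succ_iff.mp j.isLt
        omega
      simp [h1, h2]

theorem exp_entry_aux (q : ℕ) (U : Matrix (Fin (q + 1)) (Fin (q + 1)) ℝ)
    (hU : ∀ i j : Fin (q + 1), U i j = if (j : ℕ) = (i : ℕ) + 1 then 1 else 0)
    (t : ℝ) (i : Fin (q+1)) :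
    (NormedSpace.exp (t • U)) i (Fin.last q) = t ^ (q - (i:ℕ)) / (q - (i:ℕ)).factorial := by
  rw [NormedSpace.exp_eq_tsum ℝ]
  have hz : ∀ n ∉ Finset.range (q+1), ((n.factorial⁻¹ : ℝ) • (t • U) ^ n) = 0 := by
    intro n hn
    rw [Finset.mem_range, not_lt] at hn
    have hUn : U ^ n = 0 := by
      ext a b
      rw [shift_pow_aux q U hU]
      have : (b : ℕ) ≠ (a : ℕ) + n := by
        have := Nat.lt_succ_iff.mp b.isLt
        omega
      simp [this]
    rw [smul_pow, hUn, smul_zero, smul_zero]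
  beta_reduce
  rw [tsum_eq_sum hz]
  rw [Matrix.sum_apply]
  have hiq : (i : ℕ) ≤ q := Nat.lt_succ_iff.mp i.isLt
  rw [Finset.sum_eq_single (q - (i:ℕ))]
  · simp only [smul_pow, Matrix.smul_apply, shift_pow_aux q U hU, Fin.val_last]
    rw [if_pos (by omega)]
    simp [div_eq_inv_mul, mul_comm]
  · intro n _ hn
    simp only [smul_pow, Matrix.smul_apply, shift_pow_aux q U hU, Fin.val_last]
    rw [if_neg (by omega)]
    simp
  · intro hmem
    exact absurd (Finset.mem_range.mpr (by omega)) hmem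

theorem sandwich_aux (q : ℕ) (σ : ℝ) (e : Fin (q + 1) → ℝ) (he : e = Pi.single (Fin.last q) 1)
    (M : Matrix (Fin (q+1)) (Fin (q+1)) ℝ) (i j : Fin (q+1)) :
    (M * (σ ^ 2 • Matrix.vecMulVec e e) * Mᵀ) i j
      = σ ^ 2 * M i (Fin.last q) * M j (Fin.last q) := by
  simp only [Matrix.mul_apply, Matrix.smul_apply, Matrix.vecMulVec_apply, he,
    Pi.single_apply, Matrix.transpose_apply, smul_eq_mul]
  rw [Finset.sum_eq_single (Fin.last q) (by intro b _ hb; simp [hb]) (by simp)]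
  rw [Finset.sum_eq_single (Fin.last q) (by intro b _ hb; simp [hb]) (by simp)]
  simp only [if_true]
  ring

/-- The discrete diffusion matrix of the q-times integrated Wiener process,
Q(h)_{ij} = σ² h^{2q+1-i-j} / ((2q+1-i-j)(q-i)!(q-j)!), equals
∫_0^h exp(U(h-τ)) e_q σ² e_qᵀ exp(U(h-τ))ᵀ dτ. -/
theorem iwp_diffusion_integral (q : ℕ) (σ h : ℝ) (hσ : 0 < σ) (hh : 0 < h)
    (U : Matrix (Fin (q + 1)) (Fin (q + 1)) ℝ)
    (hU : ∀ i j : Fin (q + 1), U i j = if (j : ℕ) = (i : ℕ) + 1 then 1 else 0)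
    (e : Fin (q + 1) → ℝ) (he : e = Pi.single (Fin.last q) 1)
    (Q : Matrix (Fin (q + 1)) (Fin (q + 1)) ℝ)
    (hQ : ∀ i j : Fin (q + 1),
      Q i j = σ ^ 2 * h ^ (2 * q + 1 - (i : ℕ) - (j : ℕ)) /
        (((2 * q + 1 - (i : ℕ) - (j : ℕ)) * (q - (i : ℕ)).factorial *
          (q - (j : ℕ)).factorial : ℕ) : ℝ)) :
    ∀ i j : Fin (q + 1),
      Q i j = ∫ τ in (0 : ℝ)..h,
        ((NormedSpace.exp ((h - τ) • U)) * (σ ^ 2 • Matrix.vecMulVec e e) *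
          (NormedSpace.exp ((h - τ) • U))ᵀ) i j := by
  intro i j
  have hiq : (i : ℕ) ≤ q := Nat.lt_succ_iff.mp i.isLt
  have hjq : (j : ℕ) ≤ q := Nat.lt_succ_iff.mp j.isLt
  set a : ℕ := q - (i : ℕ) with ha
  set b : ℕ := q - (j : ℕ) with hb
  have key : ∀ τ : ℝ,
      ((NormedSpace.exp ((h - τ) • U)) * (σ ^ 2 • Matrix.vecMulVec e e) *
          (NormedSpace.exp ((h - τ) • U))ᵀ) i j
        = (σ ^ 2 / ((a.factorial : ℝ) * (b.factorial : ℝ))) * (h - τ) ^ (a + b) := by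
    intro τ
    rw [sandwich_aux q σ e he, exp_entry_aux q U hU, exp_entry_aux q U hU]
    rw [pow_add]
    field_simp
    ring
  simp only [key]
  rw [intervalIntegral.integral_const_mul]
  have hint : (∫ τ in (0:ℝ)..h, (h - τ) ^ (a + b))
      = h ^ (a + b + 1) / ((a + b : ℕ) + 1) := by
    have := intervalIntegral.integral_comp_sub_left (a := (0:ℝ)) (b := h)
      (fun x => x ^ (a + b)) h
    simp only [sub_zero, sub_self] at this
    rw [this, integral_pow]
    simp
  rw [hint, hQ]
  have hnum : 2 * q + 1 - (i : ℕ) - (j : ℕ) = a + b + 1 := by omega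
  rw [hnum]
  have h1 : ((a + b + 1 : ℕ) : ℝ) ≠ 0 := by positivity
  have h2 : ((a.factorial : ℕ) : ℝ) ≠ 0 := by positivity
  have h3 : ((b.factorial : ℕ) : ℝ) ≠ 0 := by positivity
  push_cast
  field_simp
  ring
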